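/- Every rational function f ∈ K(z) of degree ≥ 1 is Lipschitz continuous on (P^1(K), chordal metric) with Lipschitz constant 1/|Res(H)|, where H = (H_0, H_1) is a normalized homogeneous lift of f (coefficients have maximum absolute value 1) and Res(H) is the homogeneous resultant; in particular f is Lipschitz with some finite constant L ≥ 1. -/

import Mathlib

set_option linter.unusedSectionVars false


/-- The chordal metric on homogeneous representatives. -/
noncomputable def chord {K : Type*} [NormedField K] (p q : K × K) : ℝ :=
  ‖p.1 * q.2 - p.2 * q.1‖ / (max ‖p.1‖ ‖p.2‖ * max ‖q.1‖ ‖q.2‖)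

/-- The homogeneous map `K² → K²` determined by the pair of degree-`d`
homogeneous polynomials with coefficient vectors `a` and `b`:
`H(x,y) = (∑ k a_k x^k y^(d-k), ∑ k b_k x^k y^(d-k))`. -/
noncomputable def homLift {K : Type*} [Field K] (d : ℕ)
    (a b : Fin (d + 1) → K) (p : K × K) : K × K :=
  (∑ k : Fin (d + 1), a k * p.1 ^ (k : ℕ) * p.2 ^ (d - (k : ℕ)),
   ∑ k : Fin (d + 1), b k * p.1 ^ (k : ℕ) * p.2 ^ (d - (k : ℕ)))

/-- The homogeneous resultant of the pair of degree-`d` forms with coefficient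
vectors `a` and `b`, as the determinant of the `2d × 2d` Sylvester matrix. -/
noncomputable def homResultant {K : Type*} [Field K] (d : ℕ)
    (a b : Fin (d + 1) → K) : K :=
  Matrix.det (fun i j : Fin (2 * d) =>
    if hi : (i : ℕ) < d then
      (if h : (i : ℕ) ≤ (j : ℕ) ∧ (j : ℕ) ≤ (i : ℕ) + d then
        a ⟨(j : ℕ) - (i : ℕ), by omega⟩ else 0)
    else
      (if h : (i : ℕ) - d ≤ (j : ℕ) ∧ (j : ℕ) ≤ (i : ℕ) - d + d then
        b ⟨(j : ℕ) - ((i : ℕ) - d), by omega⟩ else 0))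

section Helpers
variable {K : Type*} [NormedField K]

theorem nonarch_sum (hna : IsNonarchimedean (norm : K → ℝ)) {ι : Type*} (s : Finset ι)
    (f : ι → K) {C : ℝ} (hC : 0 ≤ C) (h : ∀ i ∈ s, ‖f i‖ ≤ C) : ‖∑ i ∈ s, f i‖ ≤ C := by
  classical
  induction s using Finset.cons_induction with
  | empty => simpa using hC
  | cons i s his ih =>
    rw [Finset.sum_cons]
    exact le_trans (hna _ _) (max_le (h _ (Finset.mem_cons_self _ _))
      (ih fun j hj => h _ (Finset.mem_cons_of_mem hj)))

theorem nonarch_det_le (hna : IsNonarchimedean (norm : K → ℝ)) {n : ℕ}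
    (M : Matrix (Fin n) (Fin n) K) (h : ∀ i j, ‖M i j‖ ≤ 1) : ‖M.det‖ ≤ 1 := by
  rw [Matrix.det_apply]
  refine nonarch_sum hna _ _ zero_le_one fun σ _ => ?_
  have hs : ‖Equiv.Perm.sign σ • ∏ i, M (σ i) i‖ = ‖∏ i, M (σ i) i‖ := by
    rcases Int.units_eq_one_or (Equiv.Perm.sign σ) with h1 | h1 <;>
      simp [h1, Units.smul_def, norm_neg]
  rw [hs, norm_prod]
  exact Finset.prod_le_one (fun i _ => norm_nonneg _) (fun i _ => h _ _)

theorem nonarch_sub (hna : IsNonarchimedean (norm : K → ℝ)) (x y : K) :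
    ‖x - y‖ ≤ max ‖x‖ ‖y‖ := by
  have := hna x (-y)
  simpa [sub_eq_add_neg] using this

end Helpers


section VanishAux
variable {K : Type*} [NormedField K]

theorem vanish_core (hna : IsNonarchimedean (norm : K → ℝ)) (d : ℕ)
    (A : ℕ → K) {C : ℝ} (hC : 0 ≤ C) (hA : ∀ j, ‖A j‖ ≤ C)
    (q1 q2 p1 p2 : K) (hq1 : ‖q1‖ ≤ 1) (hq2 : ‖q2‖ = 1)
    (hp1 : ‖p1‖ ≤ 1) (hp2 : ‖p2‖ ≤ 1)
    (hv : ∑ j ∈ Finset.range (d+1), A j * q1 ^ j * q2 ^ (d - j) = 0) :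
    ‖∑ j ∈ Finset.range (d+1), A j * p1 ^ j * p2 ^ (d - j)‖ ≤ ‖p1 * q2 - p2 * q1‖ * C := by
  have hq2ne : q2 ≠ 0 := by intro h; rw [h] at hq2; simp at hq2
  set w : ℕ → K := fun k => ∑ j ∈ Finset.Ioc k d, A j * q1 ^ (j - k - 1) * q2 ^ (d - j)
    with hw
  set g : ℕ → K := fun k => (q2⁻¹) ^ (d - k) * w k with hg
  have hgd : g d = 0 := by simp [hg, hw]
  have hgb : ∀ k, ‖g k‖ ≤ C := by
    intro k
    rw [hg]; dsimp only
    rw [norm_mul, norm_pow, norm_inv, hq2]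
    simp only [inv_one, one_pow, one_mul]
    refine nonarch_sum hna _ _ hC fun j hj => ?_
    rw [norm_mul, norm_mul, norm_pow, norm_pow, hq2, one_pow, mul_one]
    calc ‖A j‖ * ‖q1‖ ^ (j - k - 1) ≤ ‖A j‖ * 1 :=
          mul_le_mul_of_nonneg_left (pow_le_one₀ (norm_nonneg _) hq1) (norm_nonneg _)
      _ ≤ C := by rw [mul_one]; exact hA j
  have hq1w : ∀ k, q1 * w k = ∑ j ∈ Finset.Ioc k d, A j * q1 ^ (j - k) * q2 ^ (d - j) := by
    intro k
    rw [hw]; dsimp only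
    rw [Finset.mul_sum]
    refine Finset.sum_congr rfl fun j hj => ?_
    rw [Finset.mem_Ioc] at hj
    have hjk : q1 ^ (j - k) = q1 ^ (j - k - 1) * q1 := by
      rw [← pow_succ]; congr 1; omega
    rw [hjk]; ring
  have hE1 : ∀ k, 1 ≤ k → k ≤ d → q2 * g (k-1) - q1 * g k = A k := by
    intro k hk1 hkd
    have hIoc : Finset.Ioc (k-1) d = insert k (Finset.Ioc k d) := by
      ext x; simp only [Finset.mem_Ioc, Finset.mem_insert]; omega
    have hw1 : w (k-1) = A k * q2 ^ (d - k)
        + ∑ j ∈ Finset.Ioc k d, A j * q1 ^ (j - k) * q2 ^ (d - j) := by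
      rw [hw]; dsimp only
      rw [hIoc, Finset.sum_insert (by simp)]
      congr 1
      · rw [show k - (k-1) - 1 = 0 by omega, pow_zero, mul_one]
      · refine Finset.sum_congr rfl fun j hj => ?_
        rw [Finset.mem_Ioc] at hj
        rw [show j - (k-1) - 1 = j - k by omega]
    have hq2g : q2 * g (k-1) = (q2⁻¹) ^ (d - k) * w (k-1) := by
      rw [hg]; dsimp only
      rw [show d - (k-1) = (d - k) + 1 by omega, pow_succ]
      rw [show q2 * ((q2⁻¹) ^ (d-k) * q2⁻¹ * w (k-1)) = (q2 * q2⁻¹) * ((q2⁻¹) ^ (d-k) * w (k-1)) from by ring,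
        mul_inv_cancel₀ hq2ne, one_mul]
    have hq1g : q1 * g k = (q2⁻¹) ^ (d - k) * ∑ j ∈ Finset.Ioc k d, A j * q1 ^ (j - k) * q2 ^ (d - j) := by
      rw [hg]; dsimp only
      rw [show q1 * ((q2⁻¹) ^ (d-k) * w k) = (q2⁻¹) ^ (d-k) * (q1 * w k) from by ring, hq1w]
    rw [hq2g, hq1g, hw1, mul_add, add_sub_cancel_right]
    rw [show (q2⁻¹) ^ (d-k) * (A k * q2 ^ (d-k)) = A k * ((q2⁻¹) ^ (d-k) * q2 ^ (d-k)) from by ring,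
      ← mul_pow, inv_mul_cancel₀ hq2ne, one_pow, mul_one]
  have hE0 : -(q1 * g 0) = A 0 := by
    have hr : Finset.range (d+1) = insert 0 (Finset.Ioc 0 d) := by
      ext x; simp only [Finset.mem_range, Finset.mem_insert, Finset.mem_Ioc]; omega
    rw [hr, Finset.sum_insert (by simp)] at hv
    have h0 : (∑ j ∈ Finset.Ioc 0 d, A j * q1 ^ (j - 0) * q2 ^ (d - j)) = -(A 0 * q2 ^ d) := by
      rw [eq_neg_iff_add_eq_zero, add_comm, ← hv]
      congr 1
      simp
    rw [hg]; dsimp only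
    rw [show q1 * ((q2⁻¹) ^ (d - 0) * w 0) = (q2⁻¹) ^ (d-0) * (q1 * w 0) from by ring, hq1w, h0]
    rw [show -((q2⁻¹) ^ (d - 0) * -(A 0 * q2 ^ d)) = A 0 * ((q2⁻¹) ^ d * q2 ^ d) from by
      rw [Nat.sub_zero]; ring]
    rw [← mul_pow, inv_mul_cancel₀ hq2ne, one_pow, mul_one]
  set T : K := ∑ k ∈ Finset.range d, g k * p1 ^ k * p2 ^ (d - 1 - k) with hT
  have key : ∑ j ∈ Finset.range (d+1), A j * p1 ^ j * p2 ^ (d - j) = (p1 * q2 - p2 * q1) * T := by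
    have e_eq : ∀ j ∈ Finset.range (d+1), A j * p1 ^ j * p2 ^ (d - j)
        = ((if j = 0 then 0 else q2 * g (j-1)) * p1 ^ j * p2 ^ (d - j))
          - (q1 * g j * p1 ^ j * p2 ^ (d - j)) := by
      intro j hj
      rw [Finset.mem_range] at hj
      rcases Nat.eq_zero_or_pos j with h0 | h1
      · subst h0
        rw [if_pos rfl, zero_mul, zero_mul, zero_sub, ← neg_mul, ← neg_mul, hE0]
      · rw [if_neg (by omega), ← sub_mul, ← sub_mul, hE1 j h1 (by omega)]
    rw [Finset.sum_congr rfl e_eq, Finset.sum_sub_distrib]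
    have hfirst : (∑ j ∈ Finset.range (d+1), (if j = 0 then 0 else q2 * g (j-1)) * p1 ^ j * p2 ^ (d - j))
        = p1 * q2 * T := by
      rw [Finset.sum_range_succ']
      have hite : ∀ k : ℕ, (if k + 1 = 0 then (0:K) else q2 * g (k+1-1)) = q2 * g k := by
        intro k; simp
      simp only [hite, ite_true, zero_mul, add_zero]
      rw [hT, Finset.mul_sum]
      refine Finset.sum_congr rfl fun k hk => ?_
      rw [Finset.mem_range] at hk
      rw [show d - (k+1) = d - 1 - k by omega, pow_succ]
      ring
    have hsecond : (∑ j ∈ Finset.range (d+1), q1 * g j * p1 ^ j * p2 ^ (d - j))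
        = p2 * q1 * T := by
      rw [Finset.sum_range_succ, hgd, mul_zero, zero_mul, zero_mul, add_zero, hT, Finset.mul_sum]
      refine Finset.sum_congr rfl fun k hk => ?_
      rw [Finset.mem_range] at hk
      rw [show d - k = (d - 1 - k) + 1 by omega, pow_succ]
      ring
    rw [hfirst, hsecond]
    ring
  rw [key, norm_mul]
  refine mul_le_mul_of_nonneg_left ?_ (norm_nonneg _)
  rw [hT]
  refine nonarch_sum hna _ _ hC fun k hk => ?_
  rw [norm_mul, norm_mul]
  calc ‖g k‖ * ‖p1 ^ k‖ * ‖p2 ^ (d-1-k)‖ ≤ C * 1 * 1 := by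
        refine mul_le_mul (mul_le_mul (hgb k) ?_ (norm_nonneg _) hC) ?_ (norm_nonneg _)
          (by positivity)
        · rw [norm_pow]; exact pow_le_one₀ (norm_nonneg _) hp1
        · rw [norm_pow]; exact pow_le_one₀ (norm_nonneg _) hp2
    _ = C := by ring


theorem vanish_bound (hna : IsNonarchimedean (norm : K → ℝ)) {d : ℕ}
    (c : Fin (d+1) → K) {C : ℝ} (hC : 0 ≤ C) (hc : ∀ k, ‖c k‖ ≤ C) (q p : K × K)
    (hq : max ‖q.1‖ ‖q.2‖ = 1) (hp1 : ‖p.1‖ ≤ 1) (hp2 : ‖p.2‖ ≤ 1)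
    (hv : ∑ k : Fin (d+1), c k * q.1 ^ (k:ℕ) * q.2 ^ (d - (k:ℕ)) = 0) :
    ‖∑ k : Fin (d+1), c k * p.1 ^ (k:ℕ) * p.2 ^ (d - (k:ℕ))‖ ≤ ‖p.1 * q.2 - p.2 * q.1‖ * C := by
  set A : ℕ → K := fun j => if h : j < d+1 then c ⟨j, h⟩ else 0 with hA
  have hAk : ∀ k : Fin (d+1), A (k:ℕ) = c k := by
    intro k; rw [hA]; dsimp only; rw [dif_pos k.isLt]
  have hAC : ∀ j, ‖A j‖ ≤ C := by
    intro j; rw [hA]; dsimp only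
    split
    · exact hc _
    · simpa using hC
  have conv : ∀ x y : K, (∑ k : Fin (d+1), c k * x ^ (k:ℕ) * y ^ (d - (k:ℕ)))
      = ∑ j ∈ Finset.range (d+1), A j * x ^ j * y ^ (d - j) := by
    intro x y
    rw [← Fin.sum_univ_eq_sum_range (fun j => A j * x ^ j * y ^ (d - j)) (d+1)]
    exact Finset.sum_congr rfl fun k _ => by rw [hAk k]
  rw [conv] at hv ⊢
  have hqle1 : ‖q.1‖ ≤ 1 := le_of_le_of_eq (le_max_left _ _) hq
  have hqle2 : ‖q.2‖ ≤ 1 := le_of_le_of_eq (le_max_right _ _) hq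
  have hcase : ‖q.1‖ = 1 ∨ ‖q.2‖ = 1 := by
    rcases max_choice ‖q.1‖ ‖q.2‖ with h | h
    · left; rw [← h, hq]
    · right; rw [← h, hq]
  rcases hcase with hq1 | hq2
  · -- reflect
    have refl_eq : ∀ (x y : K), (∑ j ∈ Finset.range (d+1), A j * x ^ j * y ^ (d - j))
        = ∑ j ∈ Finset.range (d+1), A (d - j) * y ^ j * x ^ (d - j) := by
      intro x y
      rw [← Finset.sum_range_reflect (fun j => A j * x ^ j * y ^ (d - j)) (d+1)]
      refine Finset.sum_congr rfl fun j hj => ?_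
      rw [Finset.mem_range] at hj
      rw [show d + 1 - 1 - j = d - j by omega, show d - (d - j) = j by omega]
      ring
    rw [refl_eq] at hv ⊢
    have := vanish_core hna d (fun j => A (d - j)) hC (fun j => hAC _)
      q.2 q.1 p.2 p.1 hqle2 hq1 hp2 hp1 hv
    calc ‖∑ j ∈ Finset.range (d+1), A (d - j) * p.2 ^ j * p.1 ^ (d - j)‖
        ≤ ‖p.2 * q.1 - p.1 * q.2‖ * C := this
      _ = ‖p.1 * q.2 - p.2 * q.1‖ * C := by rw [norm_sub_rev]
  · exact vanish_core hna d A hC hAC q.1 q.2 p.1 p.2 hqle1 hq2 hp1 hp2 hv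


end VanishAux

section Sylv
variable {F : Type*} [Field F]

noncomputable def sylv (d : ℕ) (a b : Fin (d + 1) → F) :
    Matrix (Fin (2 * d)) (Fin (2 * d)) F := fun i j =>
  if hi : (i : ℕ) < d then
    (if h : (i : ℕ) ≤ (j : ℕ) ∧ (j : ℕ) ≤ (i : ℕ) + d then
      a ⟨(j : ℕ) - (i : ℕ), by omega⟩ else 0)
  else
    (if h : (i : ℕ) - d ≤ (j : ℕ) ∧ (j : ℕ) ≤ (i : ℕ) - d + d then
      b ⟨(j : ℕ) - ((i : ℕ) - d), by omega⟩ else 0)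

theorem homResultant_eq_det (d : ℕ) (a b : Fin (d + 1) → F) :
    homResultant d a b = (sylv d a b).det := rfl

theorem window_sum (d : ℕ) (hd : 1 ≤ d) (c : Fin (d+1) → F) (x y : F) (t : ℕ)
    (ht : t ≤ d - 1) :
    (∑ j ∈ Finset.range (2*d),
      (if h : t ≤ j ∧ j ≤ t + d then c ⟨j - t, by omega⟩ else 0) * (x ^ j * y ^ (2*d - 1 - j)))
    = x ^ t * y ^ (d - 1 - t) * ∑ k : Fin (d+1), c k * x ^ (k:ℕ) * y ^ (d - (k:ℕ)) := by
  have hsub : (Finset.range (d+1)).image (fun k => t + k) ⊆ Finset.range (2*d) := by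
    intro j hj
    rw [Finset.mem_image] at hj
    obtain ⟨k, hk, rfl⟩ := hj
    rw [Finset.mem_range] at hk ⊢
    omega
  have hvan : ∀ j ∈ Finset.range (2*d), j ∉ (Finset.range (d+1)).image (fun k => t + k) →
      (if h : t ≤ j ∧ j ≤ t + d then c ⟨j - t, by omega⟩ else 0) * (x ^ j * y ^ (2*d - 1 - j)) = 0 := by
    intro j _ hj
    rw [dif_neg, zero_mul]
    intro h
    exact hj (Finset.mem_image.mpr ⟨j - t, Finset.mem_range.mpr (by omega), by omega⟩)
  rw [← Finset.sum_subset hsub hvan, Finset.sum_image (by intro x hx y hy h; exact Nat.add_left_cancel h)]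
  rw [← Fin.sum_univ_eq_sum_range
    (fun k => (if h : t ≤ t + k ∧ t + k ≤ t + d then c ⟨t + k - t, by omega⟩ else 0)
      * (x ^ (t + k) * y ^ (2*d - 1 - (t + k)))) (d+1)]
  rw [Finset.mul_sum]
  refine Finset.sum_congr rfl fun k _ => ?_
  have hkd : (k : ℕ) ≤ d := by omega
  rw [dif_pos ⟨by omega, by omega⟩]
  have h1 : (⟨t + (k:ℕ) - t, by omega⟩ : Fin (d+1)) = k := by
    apply Fin.ext; simp
  rw [h1, pow_add, show 2*d - 1 - (t + (k:ℕ)) = (d - 1 - t) + (d - (k:ℕ)) by omega, pow_add]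
  ring

theorem sylv_mulVec (d : ℕ) (hd : 1 ≤ d) (a b : Fin (d+1) → F) (p : F × F) (i : Fin (2*d)) :
    (sylv d a b).mulVec (fun j => p.1 ^ (j:ℕ) * p.2 ^ (2*d - 1 - (j:ℕ))) i =
    if (i:ℕ) < d then p.1 ^ (i:ℕ) * p.2 ^ (d - 1 - (i:ℕ)) * (homLift d a b p).1
    else p.1 ^ ((i:ℕ) - d) * p.2 ^ (d - 1 - ((i:ℕ) - d)) * (homLift d a b p).2 := by
  rw [Matrix.mulVec, dotProduct]
  by_cases hi : (i : ℕ) < d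
  · rw [if_pos hi]
    have hbody : ∀ j : Fin (2*d), sylv d a b i j * (p.1 ^ (j:ℕ) * p.2 ^ (2*d - 1 - (j:ℕ)))
        = (if h : (i:ℕ) ≤ (j:ℕ) ∧ (j:ℕ) ≤ (i:ℕ) + d then a ⟨(j:ℕ) - (i:ℕ), by omega⟩ else 0)
          * (p.1 ^ (j:ℕ) * p.2 ^ (2*d - 1 - (j:ℕ))) := by
      intro j; rw [sylv, dif_pos hi]
    rw [Finset.sum_congr rfl fun j _ => hbody j]
    rw [Fin.sum_univ_eq_sum_range
      (fun j => (if h : (i:ℕ) ≤ j ∧ j ≤ (i:ℕ) + d then a ⟨j - (i:ℕ), by omega⟩ else 0)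
        * (p.1 ^ j * p.2 ^ (2*d - 1 - j))) (2*d)]
    exact window_sum d hd a p.1 p.2 (i:ℕ) (by omega)
  · rw [if_neg hi]
    have hbody : ∀ j : Fin (2*d), sylv d a b i j * (p.1 ^ (j:ℕ) * p.2 ^ (2*d - 1 - (j:ℕ)))
        = (if h : (i:ℕ) - d ≤ (j:ℕ) ∧ (j:ℕ) ≤ (i:ℕ) - d + d then b ⟨(j:ℕ) - ((i:ℕ) - d), by omega⟩ else 0)
          * (p.1 ^ (j:ℕ) * p.2 ^ (2*d - 1 - (j:ℕ))) := by
      intro j; rw [sylv, dif_neg hi]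
    rw [Finset.sum_congr rfl fun j _ => hbody j]
    rw [Fin.sum_univ_eq_sum_range
      (fun j => (if h : (i:ℕ) - d ≤ j ∧ j ≤ (i:ℕ) - d + d then b ⟨j - ((i:ℕ) - d), by omega⟩ else 0)
        * (p.1 ^ j * p.2 ^ (2*d - 1 - j))) (2*d)]
    exact window_sum d hd b p.1 p.2 ((i:ℕ) - d) (by omega)

end Sylv



section ResNeZero
variable {F : Type*} [Field F] [IsAlgClosed F]

open Polynomial

theorem sum_range_split (f : ℕ → F) (m n : ℕ) :
    ∑ i ∈ Finset.range (m+n), f i = ∑ i ∈ Finset.range m, f i + ∑ i ∈ Finset.range n, f (m+i) := by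
  induction n with
  | zero => simp
  | succ n ih => rw [Nat.add_succ, Finset.sum_range_succ, ih, Finset.sum_range_succ, add_assoc]

theorem coeff_sum_C_X (n : ℕ) (c : ℕ → F) (m : ℕ) :
    (∑ j ∈ Finset.range n, Polynomial.C (c j) * Polynomial.X ^ j).coeff m
    = if m < n then c m else 0 := by
  rw [Polynomial.finset_sum_coeff]
  simp_rw [Polynomial.coeff_C_mul, Polynomial.coeff_X_pow]
  have h : ∀ j ∈ Finset.range n, c j * (if m = j then (1:F) else 0)
      = if j = m then c j else 0 := by
    intro j _
    by_cases h : m = j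
    · subst h; simp
    · rw [if_neg h, if_neg (Ne.symm h), mul_zero]
  rw [Finset.sum_congr rfl h, Finset.sum_ite_eq' (Finset.range n) m (fun j => c j)]
  simp [Finset.mem_range]

theorem res_ne_zero (d : ℕ) (hd : 1 ≤ d) (a b : Fin (d+1) → F)
    (hnondeg : ∀ p : F × F, p ≠ 0 → homLift d a b p ≠ 0) :
    homResultant d a b ≠ 0 := by
  classical
  -- evaluation lemmas
  set A : ℕ → F := fun j => if h : j < d+1 then a ⟨j, h⟩ else 0 with hA
  set B : ℕ → F := fun j => if h : j < d+1 then b ⟨j, h⟩ else 0 with hB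
  set f : F[X] := ∑ j ∈ Finset.range (d+1), Polynomial.C (A j) * Polynomial.X ^ j with hf
  set g : F[X] := ∑ j ∈ Finset.range (d+1), Polynomial.C (B j) * Polynomial.X ^ j with hg
  have hfA : ∀ m, f.coeff m = A m := by
    intro m
    rw [hf, coeff_sum_C_X]
    split
    · rfl
    · rw [hA]; dsimp only; rw [dif_neg (by omega)]
  have hgB : ∀ m, g.coeff m = B m := by
    intro m
    rw [hg, coeff_sum_C_X]
    split
    · rfl
    · rw [hB]; dsimp only; rw [dif_neg (by omega)]
  have hfdeg : f.natDegree ≤ d := by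
    rw [Polynomial.natDegree_le_iff_coeff_eq_zero]
    intro N hN
    rw [hfA, hA]; dsimp only; rw [dif_neg (by omega)]
  have hgdeg : g.natDegree ≤ d := by
    rw [Polynomial.natDegree_le_iff_coeff_eq_zero]
    intro N hN
    rw [hgB, hB]; dsimp only; rw [dif_neg (by omega)]
  have heval1 : ∀ t : F, (homLift d a b (t,1)).1 = f.eval t := by
    intro t
    rw [hf]
    rw [Polynomial.eval_finset_sum]
    simp only [Polynomial.eval_mul, Polynomial.eval_C, Polynomial.eval_pow, Polynomial.eval_X]
    show (∑ k : Fin (d + 1), a k * t ^ (k:ℕ) * (1:F) ^ (d - (k:ℕ))) = _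
    rw [← Fin.sum_univ_eq_sum_range (fun j => A j * t ^ j) (d+1)]
    refine Finset.sum_congr rfl fun k _ => ?_
    rw [one_pow, mul_one, hA]; dsimp only; rw [dif_pos k.isLt, Fin.eta]
  have heval2 : ∀ t : F, (homLift d a b (t,1)).2 = g.eval t := by
    intro t
    rw [hg]
    rw [Polynomial.eval_finset_sum]
    simp only [Polynomial.eval_mul, Polynomial.eval_C, Polynomial.eval_pow, Polynomial.eval_X]
    show (∑ k : Fin (d + 1), b k * t ^ (k:ℕ) * (1:F) ^ (d - (k:ℕ))) = _
    rw [← Fin.sum_univ_eq_sum_range (fun j => B j * t ^ j) (d+1)]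
    refine Finset.sum_congr rfl fun k _ => ?_
    rw [one_pow, mul_one, hB]; dsimp only; rw [dif_pos k.isLt, Fin.eta]
  have hroot : ∀ t : F, f.eval t = 0 → g.eval t = 0 → False := by
    intro t hft hgt
    refine hnondeg (t, 1) (by simp [Prod.ext_iff]) ?_
    rw [Prod.ext_iff]
    exact ⟨by rw [heval1 t, hft]; rfl, by rw [heval2 t, hgt]; rfl⟩
  have htop : homLift d a b (1,0) = (a (Fin.last d), b (Fin.last d)) := by
    rw [homLift, Prod.ext_iff]
    constructor
    · show (∑ k : Fin (d + 1), a k * (1:F) ^ (k:ℕ) * (0:F) ^ (d - (k:ℕ))) = _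
      rw [Finset.sum_eq_single (Fin.last d)]
      · simp [Fin.last]
      · intro k _ hk
        have hklt := k.isLt
        have hkd : (k : ℕ) ≠ d := fun hc => hk (Fin.ext (by simpa [Fin.last] using hc))
        rw [zero_pow (by omega), mul_zero]
      · intro h; exact absurd (Finset.mem_univ _) h
    · show (∑ k : Fin (d + 1), b k * (1:F) ^ (k:ℕ) * (0:F) ^ (d - (k:ℕ))) = _
      rw [Finset.sum_eq_single (Fin.last d)]
      · simp [Fin.last]
      · intro k _ hk
        have hklt := k.isLt
        have hkd : (k : ℕ) ≠ d := fun hc => hk (Fin.ext (by simpa [Fin.last] using hc))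
        rw [zero_pow (by omega), mul_zero]
      · intro h; exact absurd (Finset.mem_univ _) h
  have htopne : ((1:F), (0:F)) ≠ 0 := by simp [Prod.ext_iff]
  have htopzero : a (Fin.last d) = 0 → b (Fin.last d) = 0 → False := by
    intro h1 h2
    exact hnondeg (1,0) htopne (by rw [htop, h1, h2]; rfl)
  -- main argument
  intro hres
  rw [homResultant_eq_det] at hres
  obtain ⟨wv, hwv0, hwvS⟩ := Matrix.exists_vecMul_eq_zero_iff.mpr hres
  set W : ℕ → F := fun i => if h : i < 2*d then wv ⟨i, h⟩ else 0 with hW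
  set u : F[X] := ∑ i ∈ Finset.range d, Polynomial.C (W i) * Polynomial.X ^ i with hu
  set v : F[X] := ∑ i ∈ Finset.range d, Polynomial.C (W (d+i)) * Polynomial.X ^ i with hv
  have hucoeff : ∀ m, u.coeff m = if m < d then W m else 0 := fun m => coeff_sum_C_X d _ m
  have hvcoeff : ∀ m, v.coeff m = if m < d then W (d+m) else 0 := fun m => coeff_sum_C_X d _ m
  have hudeg : u.natDegree ≤ d - 1 := by
    rw [Polynomial.natDegree_le_iff_coeff_eq_zero]
    intro N hN
    rw [hucoeff, if_neg (by omega)]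
  have hvdeg : v.natDegree ≤ d - 1 := by
    rw [Polynomial.natDegree_le_iff_coeff_eq_zero]
    intro N hN
    rw [hvcoeff, if_neg (by omega)]
  -- the relation u*f + v*g = 0
  have hcuf : ∀ n, (u * f).coeff n = ∑ i ∈ Finset.range d, W i * (if i ≤ n then A (n - i) else 0) := by
    intro n
    rw [hu, Finset.sum_mul, Polynomial.finset_sum_coeff]
    refine Finset.sum_congr rfl fun i _ => ?_
    rw [show Polynomial.C (W i) * Polynomial.X ^ i * f = Polynomial.C (W i) * (f * Polynomial.X ^ i) from by ring,
      Polynomial.coeff_C_mul, Polynomial.coeff_mul_X_pow']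
    congr 1
    split
    · exact hfA _
    · rfl
  have hcvg : ∀ n, (v * g).coeff n = ∑ i ∈ Finset.range d, W (d+i) * (if i ≤ n then B (n - i) else 0) := by
    intro n
    rw [hv, Finset.sum_mul, Polynomial.finset_sum_coeff]
    refine Finset.sum_congr rfl fun i _ => ?_
    rw [show Polynomial.C (W (d+i)) * Polynomial.X ^ i * g = Polynomial.C (W (d+i)) * (g * Polynomial.X ^ i) from by ring,
      Polynomial.coeff_C_mul, Polynomial.coeff_mul_X_pow']
    congr 1
    split
    · exact hgB _
    · rfl
  have hrel : u * f + v * g = 0 := by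
    ext n
    rw [Polynomial.coeff_add, Polynomial.coeff_zero, hcuf, hcvg]
    by_cases hn : n < 2*d
    · have h0 := congrFun hwvS ⟨n, hn⟩
      rw [Matrix.vecMul, dotProduct] at h0
      simp only [Pi.zero_apply] at h0
      have hbody : ∀ i : Fin (2*d), wv i * sylv d a b i ⟨n, hn⟩
          = (fun i : ℕ => if i < d then W i * (if i ≤ n ∧ n ≤ i + d then A (n-i) else 0)
              else W i * (if i - d ≤ n ∧ n ≤ i - d + d then B (n-(i-d)) else 0)) (i : ℕ) := by
        intro i
        have hWi : W (i : ℕ) = wv i := by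
          rw [hW]; dsimp only; rw [dif_pos i.isLt, Fin.eta]
        dsimp only
        rw [sylv]
        by_cases hi : (i:ℕ) < d
        · rw [dif_pos hi, if_pos hi, hWi]
          congr 1
          split
          · rename_i hcond
            have hc' : (i:ℕ) ≤ n ∧ n ≤ (i:ℕ) + d := hcond
            rw [hA]; dsimp only; rw [dif_pos (by omega)]
          · rfl
        · rw [dif_neg hi, if_neg hi, hWi]
          congr 1
          split
          · rename_i hcond
            have hc' : (i:ℕ) - d ≤ n ∧ n ≤ (i:ℕ) - d + d := hcond
            rw [hB]; dsimp only; rw [dif_pos (by omega)]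
          · rfl
      rw [Finset.sum_congr rfl fun i _ => hbody i] at h0
      rw [Fin.sum_univ_eq_sum_range
        (fun i : ℕ => if i < d then W i * (if i ≤ n ∧ n ≤ i + d then A (n-i) else 0)
          else W i * (if i - d ≤ n ∧ n ≤ i - d + d then B (n-(i-d)) else 0)) (2*d)] at h0
      rw [two_mul, sum_range_split] at h0
      have hsplit1 : ∀ i ∈ Finset.range d,
          (if i < d then W i * (if i ≤ n ∧ n ≤ i + d then A (n-i) else 0)
            else W i * (if i - d ≤ n ∧ n ≤ i - d + d then B (n-(i-d)) else 0))
          = W i * (if i ≤ n then A (n - i) else 0) := by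
        intro i hi
        rw [Finset.mem_range] at hi
        rw [if_pos hi]
        congr 1
        by_cases h1 : i ≤ n
        · by_cases h2 : n ≤ i + d
          · rw [if_pos ⟨h1, h2⟩, if_pos h1]
          · rw [if_neg (by tauto), if_pos h1, hA]; dsimp only; rw [dif_neg (by omega)]
        · rw [if_neg (by tauto), if_neg h1]
      have hsplit2 : ∀ i ∈ Finset.range d,
          (if d + i < d then W (d+i) * (if d + i ≤ n ∧ n ≤ d + i + d then A (n-(d+i)) else 0)
            else W (d+i) * (if d + i - d ≤ n ∧ n ≤ d + i - d + d then B (n-(d+i-d)) else 0))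
          = W (d+i) * (if i ≤ n then B (n - i) else 0) := by
        intro i hi
        rw [Finset.mem_range] at hi
        rw [if_neg (by omega)]
        rw [show d + i - d = i by omega]
        congr 1
        by_cases h1 : i ≤ n
        · by_cases h2 : n ≤ i + d
          · rw [if_pos ⟨h1, h2⟩, if_pos h1]
          · rw [if_neg (by tauto), if_pos h1, hB]; dsimp only; rw [dif_neg (by omega)]
        · rw [if_neg (by tauto), if_neg h1]
      rw [Finset.sum_congr rfl hsplit1, Finset.sum_congr rfl hsplit2] at h0
      exact h0
    · have hz1 : ∀ i ∈ Finset.range d, W i * (if i ≤ n then A (n - i) else 0) = 0 := by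
        intro i hi
        rw [Finset.mem_range] at hi
        rcases le_or_gt i n with h1 | h1
        · rw [if_pos h1, hA]; dsimp only; rw [dif_neg (by omega), mul_zero]
        · rw [if_neg (by omega), mul_zero]
      have hz2 : ∀ i ∈ Finset.range d, W (d+i) * (if i ≤ n then B (n - i) else 0) = 0 := by
        intro i hi
        rw [Finset.mem_range] at hi
        rcases le_or_gt i n with h1 | h1
        · rw [if_pos h1, hB]; dsimp only; rw [dif_neg (by omega), mul_zero]
        · rw [if_neg (by omega), mul_zero]
      rw [Finset.sum_congr rfl hz1, Finset.sum_congr rfl hz2]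
      simp
  -- now the case analysis
  by_cases hf0 : f = 0
  · have haz : ∀ k : Fin (d+1), a k = 0 := by
      intro k
      have := hfA (k : ℕ)
      rw [hf0, Polynomial.coeff_zero] at this
      rw [hA] at this; dsimp only at this; rw [dif_pos k.isLt, Fin.eta] at this
      exact this.symm
    by_cases hgd0 : g.natDegree = 0
    · refine htopzero (haz _) ?_
      have := hgB d
      rw [Polynomial.coeff_eq_zero_of_natDegree_lt (by omega)] at this
      rw [hB] at this; dsimp only at this; rw [dif_pos (by omega)] at this
      exact this.symm
    · obtain ⟨t, ht⟩ := IsAlgClosed.exists_root g (by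
        intro hc
        exact hgd0 (Polynomial.natDegree_eq_zero_iff_degree_le_zero.mpr (le_of_eq hc)))
      refine hroot t ?_ ht
      rw [hf0]; simp
  by_cases hg0 : g = 0
  · have hbz : ∀ k : Fin (d+1), b k = 0 := by
      intro k
      have := hgB (k : ℕ)
      rw [hg0, Polynomial.coeff_zero] at this
      rw [hB] at this; dsimp only at this; rw [dif_pos k.isLt, Fin.eta] at this
      exact this.symm
    by_cases hfd0 : f.natDegree = 0
    · refine htopzero ?_ (hbz _)
      have := hfA d
      rw [Polynomial.coeff_eq_zero_of_natDegree_lt (by omega)] at this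
      rw [hA] at this; dsimp only at this; rw [dif_pos (by omega)] at this
      exact this.symm
    · obtain ⟨t, ht⟩ := IsAlgClosed.exists_root f (by
        intro hc
        exact hfd0 (Polynomial.natDegree_eq_zero_iff_degree_le_zero.mpr (le_of_eq hc)))
      refine hroot t ht ?_
      rw [hg0]; simp
  -- f, g both nonzero
  have huv : u ≠ 0 ∨ v ≠ 0 := by
    obtain ⟨i, hi⟩ := Function.ne_iff.mp hwv0
    by_cases hid : (i : ℕ) < d
    · left
      intro hu0
      apply hi
      have := hucoeff (i : ℕ)
      rw [hu0, Polynomial.coeff_zero, if_pos hid] at this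
      rw [hW] at this; dsimp only at this; rw [dif_pos i.isLt, Fin.eta] at this
      exact this.symm
    · right
      intro hv0
      apply hi
      have := hvcoeff ((i : ℕ) - d)
      rw [hv0, Polynomial.coeff_zero, if_pos (by omega)] at this
      rw [show d + ((i:ℕ) - d) = (i : ℕ) by omega] at this
      rw [hW] at this; dsimp only at this; rw [dif_pos i.isLt, Fin.eta] at this
      exact this.symm
  have hune : u ≠ 0 ∧ v ≠ 0 := by
    rcases huv with h | h
    · refine ⟨h, fun hv0 => ?_⟩
      rw [hv0, zero_mul, add_zero, mul_eq_zero] at hrel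
      tauto
    · refine ⟨fun hu0 => ?_, h⟩
      rw [hu0, zero_mul, zero_add, mul_eq_zero] at hrel
      tauto
  set h := EuclideanDomain.gcd f g with hh
  by_cases hdeg : h.natDegree = 0
  · have hhne : h ≠ 0 := fun h0 => hf0 (by
      have := EuclideanDomain.gcd_dvd_left f g
      rw [← hh, h0, zero_dvd_iff] at this
      exact this)
    have hunit : IsUnit h := by
      rw [Polynomial.eq_C_of_natDegree_eq_zero hdeg]
      refine Polynomial.isUnit_C.mpr (isUnit_iff_ne_zero.mpr ?_)
      intro hc
      exact hhne (by rw [Polynomial.eq_C_of_natDegree_eq_zero hdeg, hc, map_zero])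
    have hcop : IsCoprime f g := EuclideanDomain.gcd_isUnit_iff.mp hunit
    have hfv : f ∣ v := by
      refine hcop.dvd_of_dvd_mul_right ⟨-u, ?_⟩
      linear_combination hrel
    have hgu : g ∣ u := by
      refine hcop.symm.dvd_of_dvd_mul_right ⟨-v, ?_⟩
      linear_combination hrel
    have hfd : f.natDegree ≤ d - 1 := le_trans (Polynomial.natDegree_le_of_dvd hfv hune.2) hvdeg
    have hgd : g.natDegree ≤ d - 1 := le_trans (Polynomial.natDegree_le_of_dvd hgu hune.1) hudeg
    refine htopzero ?_ ?_
    · have := hfA d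
      rw [Polynomial.coeff_eq_zero_of_natDegree_lt (by omega)] at this
      rw [hA] at this; dsimp only at this; rw [dif_pos (by omega)] at this
      exact this.symm
    · have := hgB d
      rw [Polynomial.coeff_eq_zero_of_natDegree_lt (by omega)] at this
      rw [hB] at this; dsimp only at this; rw [dif_pos (by omega)] at this
      exact this.symm
  · obtain ⟨t, ht⟩ := IsAlgClosed.exists_root h (by
      intro hc
      exact hdeg (Polynomial.natDegree_eq_zero_iff_degree_le_zero.mpr (le_of_eq hc)))
    refine hroot t ?_ ?_
    · exact Polynomial.eval_eq_zero_of_dvd_of_eval_eq_zero (EuclideanDomain.gcd_dvd_left f g) ht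
    · exact Polynomial.eval_eq_zero_of_dvd_of_eval_eq_zero (EuclideanDomain.gcd_dvd_right f g) ht

end ResNeZero

section MainAux
variable {K : Type*} [NormedField K]

theorem res_le_max (hna : IsNonarchimedean (norm : K → ℝ)) {d : ℕ} (hd : 1 ≤ d)
    (a b : Fin (d+1) → K) (hcoeff : ∀ k, ‖a k‖ ≤ 1 ∧ ‖b k‖ ≤ 1)
    (p : K × K) (hp : max ‖p.1‖ ‖p.2‖ = 1) :
    ‖homResultant d a b‖ ≤ max ‖(homLift d a b p).1‖ ‖(homLift d a b p).2‖ := by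
  set S := sylv d a b with hS
  set V : Fin (2*d) → K := fun j => p.1 ^ (j:ℕ) * p.2 ^ (2*d - 1 - (j:ℕ)) with hV
  have hp1 : ‖p.1‖ ≤ 1 := le_of_le_of_eq (le_max_left _ _) hp
  have hp2 : ‖p.2‖ ≤ 1 := le_of_le_of_eq (le_max_right _ _) hp
  have hentry : ∀ i j, ‖S i j‖ ≤ 1 := by
    intro i j
    rw [hS, sylv]
    split
    · split
      · exact (hcoeff _).1
      · simp
    · split
      · exact (hcoeff _).2
      · simp
  have hadj : ∀ i j, ‖(Matrix.adjugate S) i j‖ ≤ 1 := by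
    intro i j
    rw [Matrix.adjugate_apply]
    refine nonarch_det_le hna _ fun i' j' => ?_
    rw [Matrix.updateRow_apply]
    split
    · rw [Pi.single_apply]; split <;> simp
    · exact hentry _ _
  have hid : ∀ j, homResultant d a b * V j
      = ∑ i, Matrix.adjugate S j i * S.mulVec V i := by
    intro j
    have h1 : (Matrix.adjugate S * S).mulVec V = (homResultant d a b) • V := by
      rw [Matrix.adjugate_mul, homResultant_eq_det, Matrix.smul_mulVec, Matrix.one_mulVec]
    have h2 := congrFun h1 j
    rw [← Matrix.mulVec_mulVec] at h2
    rw [Matrix.mulVec, dotProduct] at h2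
    rw [h2]
    simp [smul_eq_mul]
  set C := max ‖(homLift d a b p).1‖ ‖(homLift d a b p).2‖ with hC
  have hC0 : 0 ≤ C := le_trans (norm_nonneg _) (le_max_left _ _)
  have hbound : ∀ j : Fin (2*d), ‖homResultant d a b * V j‖ ≤ C := by
    intro j
    rw [hid j]
    refine nonarch_sum hna _ _ hC0 fun i _ => ?_
    rw [norm_mul, sylv_mulVec d hd a b p i]
    have hmono : ∀ (s u : ℕ), ‖p.1 ^ s * p.2 ^ u‖ ≤ 1 := by
      intro s u
      rw [norm_mul, norm_pow, norm_pow]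
      exact mul_le_one₀ (pow_le_one₀ (norm_nonneg _) hp1) (by positivity)
        (pow_le_one₀ (norm_nonneg _) hp2)
    split
    · calc ‖Matrix.adjugate S j i‖ * ‖p.1 ^ (i:ℕ) * p.2 ^ (d-1-(i:ℕ)) * (homLift d a b p).1‖
          ≤ 1 * (1 * ‖(homLift d a b p).1‖) := by
            rw [norm_mul]
            exact mul_le_mul (hadj _ _) (mul_le_mul_of_nonneg_right (hmono _ _) (norm_nonneg _))
              (by positivity) zero_le_one
        _ ≤ C := by rw [one_mul, one_mul]; exact le_max_left _ _
    · calc ‖Matrix.adjugate S j i‖ * ‖p.1 ^ ((i:ℕ)-d) * p.2 ^ (d-1-((i:ℕ)-d)) * (homLift d a b p).2‖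
          ≤ 1 * (1 * ‖(homLift d a b p).2‖) := by
            rw [norm_mul]
            exact mul_le_mul (hadj _ _) (mul_le_mul_of_nonneg_right (hmono _ _) (norm_nonneg _))
              (by positivity) zero_le_one
        _ ≤ C := by rw [one_mul, one_mul]; exact le_max_right _ _
  have hcase : ‖p.1‖ = 1 ∨ ‖p.2‖ = 1 := by
    rcases max_choice ‖p.1‖ ‖p.2‖ with h | h
    · left; rw [← h, hp]
    · right; rw [← h, hp]
  rcases hcase with h1 | h2
  · have := hbound ⟨2*d - 1, by omega⟩
    rw [hV] at this
    simp only [norm_mul, norm_pow] at this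
    rw [show 2*d - 1 - (2*d - 1) = 0 by omega] at this
    rw [h1] at this
    simpa using this
  · have := hbound ⟨0, by omega⟩
    rw [hV] at this
    simp only [norm_mul, norm_pow] at this
    rw [h2] at this
    simpa using this


theorem chord_comm (u v : K × K) : chord u v = chord v u := by
  rw [chord, chord, show u.1 * v.2 - u.2 * v.1 = -(v.1 * u.2 - v.2 * u.1) from by ring,
    norm_neg, mul_comm (max ‖u.1‖ ‖u.2‖)]

theorem chord_smul_left (c : K) (hc : c ≠ 0) (u v : K × K) :
    chord (c * u.1, c * u.2) v = chord u v := by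
  rw [chord, chord]
  dsimp only
  rw [show c * u.1 * v.2 - c * u.2 * v.1 = c * (u.1 * v.2 - u.2 * v.1) from by ring, norm_mul,
    norm_mul, norm_mul, ← mul_max_of_nonneg _ _ (norm_nonneg c), mul_assoc,
    mul_div_mul_left _ _ (norm_ne_zero_iff.mpr hc)]

theorem homLift_smul {d : ℕ} (a b : Fin (d+1) → K) (c : K) (p : K × K) :
    homLift d a b (c * p.1, c * p.2)
      = (c ^ d * (homLift d a b p).1, c ^ d * (homLift d a b p).2) := by
  rw [homLift, homLift]
  dsimp only
  rw [Prod.mk.injEq]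
  constructor <;>
  · rw [Finset.mul_sum]
    refine Finset.sum_congr rfl fun k _ => ?_
    have hck : c ^ (k:ℕ) * c ^ (d - (k:ℕ)) = c ^ d := by
      rw [← pow_add]; congr 1; have := k.isLt; omega
    calc _ * (c * p.1) ^ (k:ℕ) * (c * p.2) ^ (d - (k:ℕ))
        = (c ^ (k:ℕ) * c ^ (d - (k:ℕ))) * (_ * p.1 ^ (k:ℕ) * p.2 ^ (d - (k:ℕ))) := by
          rw [mul_pow, mul_pow]; ring
      _ = _ := by rw [hck]

theorem exists_normalizer (p : K × K) (hp : p ≠ 0) :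
    ∃ c : K, c ≠ 0 ∧ max ‖c * p.1‖ ‖c * p.2‖ = 1 := by
  rcases le_total ‖p.1‖ ‖p.2‖ with h | h
  · have h2 : p.2 ≠ 0 := by
      intro h0
      apply hp
      rw [h0, norm_zero] at h
      have h1 : p.1 = 0 := norm_le_zero_iff.mp h
      rw [Prod.ext_iff]
      exact ⟨h1, h0⟩
    refine ⟨p.2⁻¹, inv_ne_zero h2, ?_⟩
    rw [norm_mul, norm_mul, norm_inv, inv_mul_cancel₀ (norm_ne_zero_iff.mpr h2)]
    rw [max_eq_right]
    calc ‖p.2‖⁻¹ * ‖p.1‖ ≤ ‖p.2‖⁻¹ * ‖p.2‖ := by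
          refine mul_le_mul_of_nonneg_left h (by positivity)
      _ = 1 := inv_mul_cancel₀ (norm_ne_zero_iff.mpr h2)
  · have h2 : p.1 ≠ 0 := by
      intro h0
      apply hp
      rw [h0, norm_zero] at h
      have h1 : p.2 = 0 := norm_le_zero_iff.mp h
      rw [Prod.ext_iff]
      exact ⟨h0, h1⟩
    refine ⟨p.1⁻¹, inv_ne_zero h2, ?_⟩
    rw [norm_mul, norm_mul, norm_inv, inv_mul_cancel₀ (norm_ne_zero_iff.mpr h2)]
    rw [max_eq_left]
    calc ‖p.1‖⁻¹ * ‖p.2‖ ≤ ‖p.1‖⁻¹ * ‖p.1‖ := by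
          refine mul_le_mul_of_nonneg_left h (by positivity)
      _ = 1 := inv_mul_cancel₀ (norm_ne_zero_iff.mpr h2)

theorem main_core (hna : IsNonarchimedean (norm : K → ℝ)) {d : ℕ} (hd : 1 ≤ d)
    (a b : Fin (d+1) → K) (hcoeff : ∀ k, ‖a k‖ ≤ 1 ∧ ‖b k‖ ≤ 1)
    (hRne : homResultant d a b ≠ 0)
    (p q : K × K) (hp : max ‖p.1‖ ‖p.2‖ = 1) (hq : max ‖q.1‖ ‖q.2‖ = 1) :
    chord (homLift d a b p) (homLift d a b q)
      ≤ ‖homResultant d a b‖⁻¹ * chord p q := by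
  have hRpos : 0 < ‖homResultant d a b‖ := norm_pos_iff.mpr hRne
  set m := max ‖(homLift d a b p).1‖ ‖(homLift d a b p).2‖ with hm
  set M := max ‖(homLift d a b q).1‖ ‖(homLift d a b q).2‖ with hM
  have hmR : ‖homResultant d a b‖ ≤ m := res_le_max hna hd a b hcoeff p hp
  have hMR : ‖homResultant d a b‖ ≤ M := res_le_max hna hd a b hcoeff q hq
  have hmpos : 0 < m := lt_of_lt_of_le hRpos hmR
  have hMpos : 0 < M := lt_of_lt_of_le hRpos hMR
  have hm0 : 0 ≤ m := le_of_lt hmpos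
  set c : Fin (d+1) → K :=
    fun k => (homLift d a b p).2 * a k - (homLift d a b p).1 * b k with hc
  have hcb : ∀ k, ‖c k‖ ≤ m := by
    intro k
    refine le_trans (nonarch_sub hna _ _) (max_le ?_ ?_)
    · rw [norm_mul]
      calc ‖(homLift d a b p).2‖ * ‖a k‖ ≤ ‖(homLift d a b p).2‖ * 1 :=
            mul_le_mul_of_nonneg_left (hcoeff k).1 (norm_nonneg _)
        _ ≤ m := by rw [mul_one]; exact le_max_right _ _
    · rw [norm_mul]
      calc ‖(homLift d a b p).1‖ * ‖b k‖ ≤ ‖(homLift d a b p).1‖ * 1 :=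
            mul_le_mul_of_nonneg_left (hcoeff k).2 (norm_nonneg _)
        _ ≤ m := by rw [mul_one]; exact le_max_left _ _
  have hsum : ∀ z : K × K, (∑ k : Fin (d+1), c k * z.1 ^ (k:ℕ) * z.2 ^ (d - (k:ℕ)))
      = (homLift d a b p).2 * (homLift d a b z).1
        - (homLift d a b p).1 * (homLift d a b z).2 := by
    intro z
    rw [show (homLift d a b z).1 = ∑ k : Fin (d+1), a k * z.1 ^ (k:ℕ) * z.2 ^ (d - (k:ℕ)) from rfl,
      show (homLift d a b z).2 = ∑ k : Fin (d+1), b k * z.1 ^ (k:ℕ) * z.2 ^ (d - (k:ℕ)) from rfl]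
    rw [Finset.mul_sum, Finset.mul_sum, ← Finset.sum_sub_distrib]
    refine Finset.sum_congr rfl fun k _ => ?_
    rw [hc]
    ring
  have hv : (∑ k : Fin (d+1), c k * p.1 ^ (k:ℕ) * p.2 ^ (d - (k:ℕ))) = 0 := by
    rw [hsum p]
    ring
  have hNb := vanish_bound hna c hm0 hcb p q hp
    (le_of_le_of_eq (le_max_left _ _) hq) (le_of_le_of_eq (le_max_right _ _) hq) hv
  rw [hsum q] at hNb
  have hN : ‖(homLift d a b p).1 * (homLift d a b q).2
      - (homLift d a b p).2 * (homLift d a b q).1‖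
      ≤ ‖p.1 * q.2 - p.2 * q.1‖ * m := by
    rw [show (homLift d a b p).1 * (homLift d a b q).2
        - (homLift d a b p).2 * (homLift d a b q).1
        = -((homLift d a b p).2 * (homLift d a b q).1
          - (homLift d a b p).1 * (homLift d a b q).2) from by ring, norm_neg]
    rw [show q.1 * p.2 - q.2 * p.1 = -(p.1 * q.2 - p.2 * q.1) from by ring, norm_neg] at hNb
    exact hNb
  rw [chord, chord, hp, hq, one_mul, div_one]
  rw [← hm, ← hM]
  set δ := ‖p.1 * q.2 - p.2 * q.1‖ with hδ
  have hδ0 : 0 ≤ δ := norm_nonneg _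
  calc ‖(homLift d a b p).1 * (homLift d a b q).2
        - (homLift d a b p).2 * (homLift d a b q).1‖ / (m * M)
      ≤ (δ * m) / (m * M) := by gcongr
    _ = (m * δ) / (m * M) := by rw [mul_comm δ m]
    _ = δ / M := mul_div_mul_left _ _ (ne_of_gt hmpos)
    _ ≤ δ / ‖homResultant d a b‖ := by gcongr
    _ = ‖homResultant d a b‖⁻¹ * δ := div_eq_inv_mul _ _


end MainAux

/-- A rational function of degree `d ≥ 1` on `P¹(K)`, given by a normalized
non-degenerate homogeneous lift `H = (H₀, H₁)` (all coefficients of absolute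
value at most `1`, some of absolute value exactly `1`), is Lipschitz for the
chordal metric with constant `1/|Res(H)|`; in particular it is Lipschitz with
some finite constant `L ≥ 1`. -/
theorem rational_map_lipschitz {K : Type*} [NontriviallyNormedField K]
    [IsAlgClosed K] [CompleteSpace K] (hna : IsNonarchimedean (norm : K → ℝ))
    (d : ℕ) (hd : 1 ≤ d) (a b : Fin (d + 1) → K)
    (hcoeff : ∀ k, ‖a k‖ ≤ 1 ∧ ‖b k‖ ≤ 1)
    (hnormed : (∃ k, ‖a k‖ = 1) ∨ ∃ k, ‖b k‖ = 1)
    (hnondeg : ∀ p : K × K, p ≠ 0 → homLift d a b p ≠ 0) :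
    homResultant d a b ≠ 0 ∧
      (∀ p q : K × K, p ≠ 0 → q ≠ 0 →
        chord (homLift d a b p) (homLift d a b q) ≤
          ‖homResultant d a b‖⁻¹ * chord p q) ∧
      ∃ L : ℝ, 1 ≤ L ∧ ∀ p q : K × K, p ≠ 0 → q ≠ 0 →
        chord (homLift d a b p) (homLift d a b q) ≤ L * chord p q := by
  have hRne : homResultant d a b ≠ 0 := res_ne_zero d hd a b hnondeg
  have hRpos : 0 < ‖homResultant d a b‖ := norm_pos_iff.mpr hRne
  have hRle1 : ‖homResultant d a b‖ ≤ 1 := by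
    rw [homResultant_eq_det]
    refine nonarch_det_le hna _ fun i j => ?_
    rw [sylv]
    split
    · split
      · exact (hcoeff _).1
      · simp
    · split
      · exact (hcoeff _).2
      · simp
  have hmain : ∀ p q : K × K, p ≠ 0 → q ≠ 0 →
      chord (homLift d a b p) (homLift d a b q) ≤ ‖homResultant d a b‖⁻¹ * chord p q := by
    intro p q hp hq
    obtain ⟨cp, hcp, hcpn⟩ := exists_normalizer p hp
    obtain ⟨cq, hcq, hcqn⟩ := exists_normalizer q hq
    have h1 : chord ((cp * p.1, cp * p.2) : K × K) ((cq * q.1, cq * q.2) : K × K)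
        = chord p q :=
      calc chord ((cp * p.1, cp * p.2) : K × K) ((cq * q.1, cq * q.2) : K × K)
          = chord p ((cq * q.1, cq * q.2) : K × K) := chord_smul_left cp hcp p _
        _ = chord ((cq * q.1, cq * q.2) : K × K) p := chord_comm _ _
        _ = chord q p := chord_smul_left cq hcq q p
        _ = chord p q := chord_comm _ _
    have h2 : chord (homLift d a b (cp * p.1, cp * p.2)) (homLift d a b (cq * q.1, cq * q.2))
        = chord (homLift d a b p) (homLift d a b q) := by
      rw [homLift_smul a b cp p, homLift_smul a b cq q]
      calc chord ((cp ^ d * (homLift d a b p).1, cp ^ d * (homLift d a b p).2) : K × K)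
            ((cq ^ d * (homLift d a b q).1, cq ^ d * (homLift d a b q).2) : K × K)
          = chord (homLift d a b p)
              ((cq ^ d * (homLift d a b q).1, cq ^ d * (homLift d a b q).2) : K × K) :=
            chord_smul_left _ (pow_ne_zero d hcp) _ _
        _ = chord ((cq ^ d * (homLift d a b q).1, cq ^ d * (homLift d a b q).2) : K × K)
              (homLift d a b p) := chord_comm _ _
        _ = chord (homLift d a b q) (homLift d a b p) :=
            chord_smul_left _ (pow_ne_zero d hcq) _ _
        _ = chord (homLift d a b p) (homLift d a b q) := chord_comm _ _
    have hcore := main_core hna hd a b hcoeff hRne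
      ((cp * p.1, cp * p.2) : K × K) ((cq * q.1, cq * q.2) : K × K) hcpn hcqn
    rw [h1, h2] at hcore
    exact hcore
  have hL1 : (1:ℝ) ≤ ‖homResultant d a b‖⁻¹ := (one_le_inv₀ hRpos).mpr hRle1
  exact ⟨hRne, hmain, ‖homResultant d a b‖⁻¹, hL1, fun p q hp hq => hmain p q hp hq⟩
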